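/- Let p be an odd prime. If λ is a BG-partition, then λ^(1)*, the partition obtained from λ by removing its p-rim*, is also a BG-partition. -/
import Mathlib


namespace Mull

/-- A partition of a natural number, encoded as the (0-indexed) weakly decreasing,
eventually-zero sequence of its row lengths.  The Young diagram of `f` is the set
of (0-indexed) nodes `(i, j)` with `j < f i`. -/
def IsPartition (f : ℕ → ℕ) : Prop :=
  Antitone f ∧ ∃ N, f N = 0

/-- The number of nonzero rows of `f`. -/
noncomputable def len (f : ℕ → ℕ) : ℕ :=
  sInf {N | f N = 0}

/-- The size (number of nodes) of `f`. -/
noncomputable def size (f : ℕ → ℕ) : ℕ :=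
  ∑ i ∈ Finset.range (len f), f i

/-- The conjugate (transpose) partition: `conj f j` is the number of rows `i`
with `f i > j`, i.e. the length of the `j`-th column. -/
noncomputable def conj (f : ℕ → ℕ) : ℕ → ℕ :=
  fun j => Nat.card {i | j < f i}

/-- A partition is self-conjugate if it equals its conjugate. -/
def SelfConj (f : ℕ → ℕ) : Prop :=
  conj f = f

/-- The hook length of `f` at the (0-indexed) node `(i, j)`:
in 1-indexed terms this is `λ_i + λ'_j - i - j + 1`. -/
noncomputable def hook (f : ℕ → ℕ) (i j : ℕ) : ℕ :=
  f i + conj f j - i - j - 1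

/-- A BG-partition: a self-conjugate partition none of whose diagonal hook lengths
is divisible by `p`. -/
def IsBG (p : ℕ) (f : ℕ → ℕ) : Prop :=
  IsPartition f ∧ SelfConj f ∧ ∀ i, i < f i → ¬ p ∣ hook f i i

/-- A partition is `p`-regular if it does not have `p` equal nonzero parts. -/
def IsRegular (p : ℕ) (f : ℕ → ℕ) : Prop :=
  ∀ i, f (i + (p - 1)) ≠ 0 → f i ≠ f (i + (p - 1))

/-- The list of nodes of the rim of `f` (nodes `(i, j)` of the diagram such that
`(i+1, j+1)` is not in the diagram), listed from the top right to the bottom left. -/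
noncomputable def rimList (f : ℕ → ℕ) : List (ℕ × ℕ) :=
  (List.range (len f)).flatMap fun i =>
    (List.range (f i - (f (i + 1) - 1))).map fun k => (i, f i - 1 - k)

/-- Auxiliary selection of the `p`-rim from the ordered list of rim nodes (with fuel):
take the next `p`-segment (the next `p` rim nodes), then, if the last selected node is
not in the bottom row, skip the remaining rim nodes lying in the row of the last
selected node and continue from the next row. -/
def pRimAux (p : ℕ) : ℕ → List (ℕ × ℕ) → List (ℕ × ℕ)
  | 0, _ => []
  | _ + 1, [] => []
  | fuel + 1, c :: L =>
    (c :: L).take p ++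
      pRimAux p fuel (((c :: L).drop p).filter
        fun d => (((c :: L).take p).getLastD c).1 < d.1)

/-- The list of nodes of the `p`-rim of `f`, from the top right to the bottom left. -/
noncomputable def pRimList (p : ℕ) (f : ℕ → ℕ) : List (ℕ × ℕ) :=
  pRimAux p (rimList f).length (rimList f)

/-- `f` minus its `p`-rim. -/
noncomputable def removeRim (p : ℕ) (f : ℕ → ℕ) : ℕ → ℕ :=
  fun i => f i - ((pRimList p f).filter fun c => c.1 = i).length

/-- The number of columns of the Mullineux symbol of `f` (i.e. `l + 1`), namely the
number of times the `p`-rim must be removed to reach the empty partition. -/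
noncomputable def steps (p : ℕ) (f : ℕ → ℕ) : ℕ :=
  sInf {k | len ((removeRim p)^[k] f) = 0}

/-- `a_i`: the number of nodes of the `p`-rim of `λ^(i)`. -/
noncomputable def aSeq (p : ℕ) (f : ℕ → ℕ) (i : ℕ) : ℕ :=
  (pRimList p ((removeRim p)^[i] f)).length

/-- `r_i`: the number of nonzero rows of `λ^(i)`. -/
noncomputable def rSeq (p : ℕ) (f : ℕ → ℕ) (i : ℕ) : ℕ :=
  len ((removeRim p)^[i] f)

/-- `ε_i`: `0` if `p ∣ a_i` and `1` otherwise. -/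
noncomputable def epsSeq (p : ℕ) (f : ℕ → ℕ) (i : ℕ) : ℕ :=
  if p ∣ aSeq p f i then 0 else 1

/-- The Mullineux symbol of `f`, recorded as the list of its columns
`(a_i, r_i)` for `0 ≤ i ≤ l`. -/
noncomputable def GSymb (p : ℕ) (f : ℕ → ℕ) : List (ℕ × ℕ) :=
  (List.range (steps p f)).map fun i => (aSeq p f i, rSeq p f i)

/-- The effect of the Mullineux map on one column of the Mullineux symbol:
`(a_i, r_i) ↦ (a_i, s_i)` where `s_i = a_i + ε_i - r_i`. -/
def mullCol (p : ℕ) (c : ℕ × ℕ) : ℕ × ℕ :=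
  (c.1, c.1 + (if p ∣ c.1 then 0 else 1) - c.2)

/-- `f` is a self-Mullineux partition: a `p`-regular partition fixed by the Mullineux
map, i.e. every column of its Mullineux symbol is fixed by `mullCol`. -/
def SelfMull (p : ℕ) (f : ℕ → ℕ) : Prop :=
  IsPartition f ∧ IsRegular p f ∧ (GSymb p f).map (mullCol p) = GSymb p f

/-- `U_λ`: the nodes of the `p`-rim lying on or above the diagonal. -/
noncomputable def UList (p : ℕ) (f : ℕ → ℕ) : List (ℕ × ℕ) :=
  (pRimList p f).filter fun c => c.1 ≤ c.2

/-- The `p`-rim* of a self-conjugate partition: `U_λ ∪ L_λ`, where `L_λ` is the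
reflection of `U_λ` across the diagonal. -/
noncomputable def rimStar (p : ℕ) (f : ℕ → ℕ) : Finset (ℕ × ℕ) :=
  (UList p f).toFinset ∪ (UList p f).toFinset.image fun c => (c.2, c.1)

/-- `a*`: the number of nodes of the `p`-rim*. -/
noncomputable def aStar (p : ℕ) (f : ℕ → ℕ) : ℕ :=
  (rimStar p f).card

/-- `r*`: the number of nodes of `U_λ`. -/
noncomputable def rStar (p : ℕ) (f : ℕ → ℕ) : ℕ :=
  (UList p f).toFinset.card

/-- `ε* = a* mod 2`. -/
noncomputable def epsStar (p : ℕ) (f : ℕ → ℕ) : ℕ :=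
  aStar p f % 2

/-- `λ^(1)*`: `f` minus its `p`-rim*. -/
noncomputable def removeRimStar (p : ℕ) (f : ℕ → ℕ) : ℕ → ℕ :=
  fun i => f i - ((rimStar p f).filter fun c => c.1 = i).card

/-- The number of columns of the BG-symbol of `f`. -/
noncomputable def stepsStar (p : ℕ) (f : ℕ → ℕ) : ℕ :=
  sInf {k | len ((removeRimStar p)^[k] f) = 0}

/-- The BG-symbol of a self-conjugate partition, recorded as the list of its columns
`(a*_i, r*_i)` for `0 ≤ i ≤ l`. -/
noncomputable def BGSymb (p : ℕ) (f : ℕ → ℕ) : List (ℕ × ℕ) :=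
  (List.range (stepsStar p f)).map fun i =>
    (aStar p ((removeRimStar p)^[i] f), rStar p ((removeRimStar p)^[i] f))

/-- The number of diagonal nodes of `f`, i.e. `max {i : λ_i ≥ i}` in 1-indexed terms. -/
noncomputable def kDiag (f : ℕ → ℕ) : ℕ :=
  Nat.card {i | i < f i}

/-- The sequence of diagonal hook lengths of `f` (padded with zeros). -/
noncomputable def diagHooks (f : ℕ → ℕ) : ℕ → ℕ :=
  fun i => if i < f i then hook f i i else 0

-- auxiliary development
/-- number of rim nodes in row `i`. -/
def Rt (f : ℕ → ℕ) (i : ℕ) : ℕ := f i - (f (i+1) - 1)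

/-- state of the p-rim greedy at the start of row `i`. -/
def sfun (p : ℕ) (f : ℕ → ℕ) : ℕ → ℕ
  | 0 => 0
  | i+1 => if sfun p f i + Rt f i < p then sfun p f i + Rt f i else 0

/-- number of p-rim nodes in row `i`. -/
def cfun (p : ℕ) (f : ℕ → ℕ) (i : ℕ) : ℕ := min (Rt f i) (p - sfun p f i)

/-- leftmost column of the p-rim in row `i` (= new row length above diagonal). -/
def efun (p : ℕ) (f : ℕ → ℕ) (i : ℕ) : ℕ := f i - cfun p f i

/-- first row whose p-rim block touches the diagonal. -/
noncomputable def qv (p : ℕ) (f : ℕ → ℕ) : ℕ := sInf {i | efun p f i ≤ i}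

open Classical in
/-- the candidate for `λ⁽¹⁾*`. -/
noncomputable def Gf (p : ℕ) (f : ℕ → ℕ) (i : ℕ) : ℕ :=
  if i < qv p f then efun p f i
  else ((Finset.range (qv p f)).filter (fun j => i < efun p f j)).card

def SSf (f : ℕ → ℕ) (r a : ℕ) : ℕ := ∑ i ∈ Finset.Ico r a, Rt f i
def rowL (f : ℕ → ℕ) (i : ℕ) : List (ℕ × ℕ) :=
  (List.range (Rt f i)).map fun k => (i, f i - 1 - k)
noncomputable def LLf (f : ℕ → ℕ) (r : ℕ) : List (ℕ × ℕ) :=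
  (List.range' r (len f - r)).flatMap (rowL f)

section Basic
variable {p : ℕ} {f : ℕ → ℕ} (ha : Antitone f) (h0 : ∃ N, f N = 0) (hp : 0 < p)

include ha h0 in
lemma f_eq_zero_iff {i : ℕ} : f i = 0 ↔ len f ≤ i := by
  constructor
  · intro h; exact Nat.sInf_le h
  · intro h
    have h1 : f (len f) = 0 := Nat.sInf_mem h0
    have := ha h
    omega

include ha h0 in
lemma f_pos_of_lt_len {i : ℕ} (h : i < len f) : 0 < f i := by
  rcases Nat.eq_zero_or_pos (f i) with h1 | h1
  · exact absurd ((f_eq_zero_iff ha h0).mp h1) (by omega)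
  · exact h1

include ha h0 in
lemma R_pos {i : ℕ} (h : i < len f) : 1 ≤ Rt f i := by
  have h1 := f_pos_of_lt_len ha h0 h
  have h2 : f (i+1) ≤ f i := ha (by omega)
  unfold Rt; omega

lemma R_le {i : ℕ} : Rt f i ≤ f i := Nat.sub_le _ _

include hp in
lemma s_lt : ∀ i, sfun p f i < p := by
  intro i; induction i with
  | zero => simpa [sfun] using hp
  | succ i ih => rw [sfun]; split <;> omega

include ha h0 hp in
lemma c_pos {i : ℕ} (h : i < len f) : 1 ≤ cfun p f i := by
  have h1 := R_pos ha h0 h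
  have h2 := s_lt hp (p := p) (f := f) i
  unfold cfun; omega

lemma c_le_R {i : ℕ} : cfun p f i ≤ Rt f i := min_le_left _ _

lemma e_le_f {i : ℕ} : efun p f i ≤ f i := Nat.sub_le _ _

include ha h0 hp in
lemma e_lt_f {i : ℕ} (h : i < len f) : efun p f i < f i := by
  have h1 := c_pos ha h0 hp h
  have h2 := f_pos_of_lt_len ha h0 h
  have h3 : cfun p f i ≤ f i := le_trans c_le_R R_le
  unfold efun; omega

include ha h0 hp in
lemma e_anti : Antitone (efun p f) := by
  apply antitone_nat_of_succ_le
  intro i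
  by_cases h : i + 1 < len f
  · have h1 := c_pos ha h0 hp h
    have h2 : f (i+1) ≤ f i := ha (by omega)
    have h3 : cfun p f i ≤ Rt f i := c_le_R
    unfold efun Rt at *; omega
  · have h1 : f (i+1) = 0 := (f_eq_zero_iff ha h0).mpr (by omega)
    unfold efun; omega

end Basic


section Lists
variable {p : ℕ} {f : ℕ → ℕ} (ha : Antitone f) (h0 : ∃ N, f N = 0) (hp : 0 < p)

lemma SS_self {r : ℕ} : SSf f r r = 0 := by simp [SSf]

lemma SS_succ {r a : ℕ} (h : r ≤ a) : SSf f r (a+1) = SSf f r a + Rt f a := by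
  unfold SSf; rw [Finset.sum_Ico_succ_top h]

lemma SS_bot {r a : ℕ} (h : r < a) : SSf f r a = Rt f r + SSf f (r+1) a := by
  unfold SSf; rw [Finset.sum_eq_sum_Ico_succ_bot h]

lemma SS_mono {r a b : ℕ} (h : a ≤ b) : SSf f r a ≤ SSf f r b := by
  unfold SSf
  by_cases hr : r ≤ a
  · rw [← Finset.sum_Ico_consecutive _ hr h]; omega
  · rw [Finset.Ico_eq_empty (by omega)]; simp

lemma SS_split {r a b : ℕ} (h1 : r ≤ a) (h2 : a ≤ b) :
    SSf f r b = SSf f r a + SSf f a b := by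
  unfold SSf; rw [← Finset.sum_Ico_consecutive _ h1 h2]

include ha h0 in
lemma SS_ge_R {r a : ℕ} (h1 : r ≤ a) (h2 : a < len f) : Rt f a ≤ SSf f r a + Rt f a := by omega

lemma LL_nil {r : ℕ} (h : len f ≤ r) : LLf f r = [] := by
  unfold LLf
  rw [Nat.sub_eq_zero_of_le h]
  simp

lemma LL_cons {r : ℕ} (h : r < len f) : LLf f r = rowL f r ++ LLf f (r+1) := by
  unfold LLf
  have : len f - r = (len f - (r+1)) + 1 := by omega
  rw [this, List.range'_succ, List.flatMap_cons]

lemma rowL_length {i : ℕ} : (rowL f i).length = Rt f i := by simp [rowL]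

lemma rowL_mem {i a b : ℕ} :
    (a, b) ∈ rowL f i ↔ a = i ∧ f i - Rt f i ≤ b ∧ b < f i := by
  have hR : Rt f i ≤ f i := R_le
  simp only [rowL, List.mem_map, List.mem_range, Prod.mk.injEq]
  constructor
  · rintro ⟨k, hk, rfl, rfl⟩; omega
  · rintro ⟨rfl, h1, h2⟩; exact ⟨f a - 1 - b, by omega, rfl, by omega⟩

include ha h0 in
lemma LL_length : ∀ d r, len f - r = d → (LLf f r).length = SSf f r (len f) := by
  intro d
  induction d with
  | zero => intro r hr; rw [LL_nil (by omega), SSf, Finset.Ico_eq_empty (by omega)]; simp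
  | succ d ih =>
    intro r hr
    have h : r < len f := by omega
    rw [LL_cons h, List.length_append, rowL_length, ih (r+1) (by omega)]
    exact (SS_bot (by omega)).symm

include ha h0 in
lemma LL_mem : ∀ d r, len f - r = d → ∀ a b,
    ((a, b) ∈ LLf f r ↔ r ≤ a ∧ a < len f ∧ f a - Rt f a ≤ b ∧ b < f a) := by
  intro d
  induction d with
  | zero =>
    intro r hr a b
    rw [LL_nil (by omega)]
    simp only [List.not_mem_nil, false_iff]
    omega
  | succ d ih =>
    intro r hr a b
    have h : r < len f := by omega
    rw [LL_cons h, List.mem_append, rowL_mem, ih (r+1) (by omega)]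
    constructor
    · rintro (⟨rfl, h1, h2⟩ | ⟨h1, h2, h3⟩) <;> exact ⟨by omega, by omega, by omega, by omega⟩
    · rintro ⟨h1, h2, h3, h4⟩
      rcases eq_or_lt_of_le h1 with rfl | h5
      · exact Or.inl ⟨rfl, h3, h4⟩
      · exact Or.inr ⟨by omega, by omega, h3, h4⟩

include ha h0 in
lemma LL_get : ∀ d r, len f - r = d → ∀ a t, r ≤ a → a < len f →
    SSf f r a ≤ t → t < SSf f r a + Rt f a →
    (LLf f r)[t]? = some (a, f a - 1 - (t - SSf f r a)) := by
  intro d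
  induction d with
  | zero => intro r hr a t h1 h2; omega
  | succ d ih =>
    intro r hr a t h1 h2 h3 h4
    have h : r < len f := by omega
    rw [LL_cons h]
    rcases eq_or_lt_of_le h1 with rfl | h5
    · rw [SS_self] at h3 h4 ⊢
      rw [List.getElem?_append_left (by rw [rowL_length]; omega)]
      unfold rowL
      rw [List.getElem?_map, List.getElem?_range (by omega)]
      simp only [Option.map_some]
      norm_num
    · have hR : Rt f r ≤ t := by
        have := SS_bot (f := f) h5
        have := SS_mono (f := f) (r := r+1) (le_of_lt h5)
        omega
      rw [List.getElem?_append_right (by rw [rowL_length]; omega), rowL_length]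
      have hS : SSf f r a = Rt f r + SSf f (r+1) a := SS_bot h5
      rw [ih (r+1) (by omega) a (t - Rt f r) (by omega) h2 (by omega) (by omega)]
      congr 3
      omega

include ha h0 in
lemma LL_take_mem : ∀ d r, len f - r = d → ∀ m a b,
    ((a, b) ∈ (LLf f r).take m ↔
      r ≤ a ∧ a < len f ∧ f a - Rt f a ≤ b ∧ b < f a ∧
        SSf f r a + (f a - 1 - b) < m) := by
  intro d
  induction d with
  | zero =>
    intro r hr m a b
    rw [LL_nil (by omega)]
    simp only [List.take_nil, List.not_mem_nil, false_iff]
    omega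
  | succ d ih =>
    intro r hr m a b
    have h : r < len f := by omega
    rw [LL_cons h, List.take_append, List.mem_append, rowL_length]
    have hrow : ((a, b) ∈ (rowL f r).take m ↔
        a = r ∧ f r - Rt f r ≤ b ∧ b < f r ∧ f r - 1 - b < m) := by
      unfold rowL
      rw [← List.map_take, List.take_range]
      have hR : Rt f r ≤ f r := R_le
      simp only [List.mem_map, List.mem_range, Prod.mk.injEq]
      constructor
      · rintro ⟨k, hk, rfl, rfl⟩; omega
      · rintro ⟨rfl, h1, h2, h3⟩; exact ⟨f a - 1 - b, by omega, rfl, by omega⟩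
    rw [hrow, ih (r+1) (by omega)]
    constructor
    · rintro (⟨rfl, h1, h2, h3⟩ | ⟨h1, h2, h3, h4, h5⟩)
      · refine ⟨le_refl _, h, by omega, by omega, by rw [SS_self]; omega⟩
      · have hS : SSf f r a = Rt f r + SSf f (r+1) a := SS_bot (by omega)
        exact ⟨by omega, h2, h3, h4, by omega⟩
    · rintro ⟨h1, h2, h3, h4, h5⟩
      rcases eq_or_lt_of_le h1 with rfl | h6
      · rw [SS_self] at h5; exact Or.inl ⟨rfl, h3, h4, by omega⟩
      · have hS : SSf f r a = Rt f r + SSf f (r+1) a := SS_bot h6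
        exact Or.inr ⟨by omega, h2, h3, h4, by omega⟩

include ha h0 in
lemma LL_drop : ∀ d r, len f - r = d → ∀ m a, r ≤ a → a < len f →
    SSf f r a ≤ m → m ≤ SSf f r a + Rt f a →
    (LLf f r).drop m = (rowL f a).drop (m - SSf f r a) ++ LLf f (a+1) := by
  intro d
  induction d with
  | zero => intro r hr m a h1 h2; omega
  | succ d ih =>
    intro r hr m a h1 h2 h3 h4
    have h : r < len f := by omega
    rw [LL_cons h, List.drop_append, rowL_length]
    rcases eq_or_lt_of_le h1 with rfl | h5
    · rw [SS_self] at h3 h4 ⊢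
      have : m - Rt f r = 0 := by omega
      rw [this, List.drop_zero, Nat.sub_zero]
    · have hS : SSf f r a = Rt f r + SSf f (r+1) a := SS_bot h5
      have hd : (rowL f r).drop m = [] := List.drop_eq_nil_of_le (by rw [rowL_length]; omega)
      rw [hd, List.nil_append,
        ih (r+1) (by omega) (m - Rt f r) a (by omega) h2 (by omega) (by omega)]
      congr 2
      omega

include ha h0 in
lemma ZEX : ∀ d r, len f - r = d → ∀ t, t < SSf f r (len f) →
    ∃ z, r ≤ z ∧ z < len f ∧ SSf f r z ≤ t ∧ t < SSf f r z + Rt f z := by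
  intro d
  induction d with
  | zero =>
    intro r hr t ht
    rw [SSf, Finset.Ico_eq_empty (by omega)] at ht
    simp at ht
  | succ d ih =>
    intro r hr t ht
    have h : r < len f := by omega
    by_cases h1 : t < Rt f r
    · exact ⟨r, le_refl _, h, by rw [SS_self]; omega, by rw [SS_self]; omega⟩
    · have hS : SSf f r (len f) = Rt f r + SSf f (r+1) (len f) := SS_bot h
      obtain ⟨z, hz1, hz2, hz3, hz4⟩ := ih (r+1) (by omega) (t - Rt f r) (by omega)
      have hS2 : SSf f r z = Rt f r + SSf f (r+1) z := SS_bot (by omega)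
      exact ⟨z, by omega, hz2, by omega, by omega⟩

end Lists


section Main
variable {p : ℕ} {f : ℕ → ℕ} (ha : Antitone f) (h0 : ∃ N, f N = 0) (hp : 0 < p)

lemma paux_nil : ∀ fuel, pRimAux p fuel [] = [] := by
  intro fuel; cases fuel <;> rfl

lemma paux_cons (fuel : ℕ) (x : ℕ × ℕ) (xs : List (ℕ × ℕ)) :
    pRimAux p (fuel+1) (x :: xs) = (x :: xs).take p ++
      pRimAux p fuel (((x :: xs).drop p).filter
        fun d => (((x :: xs).take p).getLastD x).1 < d.1) := rfl

lemma s_run : ∀ r, sfun p f r = 0 → ∀ a, r ≤ a →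
    (∀ i, r ≤ i → i < a → SSf f r (i+1) < p) → sfun p f a = SSf f r a := by
  intro r hs a
  induction a with
  | zero =>
    intro h _
    have : r = 0 := by omega
    subst this; rw [SS_self]; exact hs
  | succ a iha =>
    intro h hcond
    rcases eq_or_lt_of_le h with rfl | hlt
    · rw [SS_self]; exact hs
    · have ha' : sfun p f a = SSf f r a := iha (by omega) (fun i h1 h2 => hcond i h1 (by omega))
      have hS : SSf f r (a+1) = SSf f r a + Rt f a := SS_succ (by omega)
      have hc := hcond a (by omega) (by omega)
      rw [sfun, ha', if_pos (by omega), hS]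

include ha h0 hp in
lemma main : ∀ fuel r, r ≤ len f → sfun p f r = 0 → (LLf f r).length ≤ fuel →
    ∀ a b, ((a, b) ∈ pRimAux p fuel (LLf f r) ↔
      r ≤ a ∧ a < len f ∧ efun p f a ≤ b ∧ b < f a) := by
  intro fuel
  induction fuel with
  | zero =>
    intro r hr hs hlen a b
    have hL : LLf f r = [] := List.eq_nil_of_length_eq_zero (by omega)
    rw [hL, paux_nil]
    simp only [List.not_mem_nil, false_iff]
    rintro ⟨h1, h2, h3, h4⟩
    have h5 : 0 < f a := f_pos_of_lt_len ha h0 h2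
    have h6 : 1 ≤ Rt f a := R_pos ha h0 h2
    have : (a, f a - 1) ∈ LLf f r := (LL_mem ha h0 _ r rfl a (f a - 1)).mpr
      ⟨h1, h2, by omega, by omega⟩
    rw [hL] at this
    simp at this
  | succ fuel ih =>
    intro r hr hs hlen a b
    rcases eq_or_lt_of_le hr with rfl | hrlt
    · rw [LL_nil (le_refl _), paux_nil]
      simp only [List.not_mem_nil, false_iff]
      omega
    · have hlenLL : (LLf f r).length = SSf f r (len f) := LL_length ha h0 _ r rfl
      have hR1 : 1 ≤ Rt f r := R_pos ha h0 hrlt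
      have hSrr : SSf f r (len f) = SSf f r (r+1) + SSf f (r+1) (len f) :=
        SS_split (by omega) (by omega)
      have hSr1 : SSf f r (r+1) = Rt f r := by rw [SS_succ (le_refl _), SS_self]; omega
      have hpos : 0 < (LLf f r).length := by omega
      obtain ⟨x, xs, hxx⟩ := List.exists_cons_of_ne_nil (List.ne_nil_of_length_pos hpos)
      rw [hxx, paux_cons, ← hxx]
      by_cases hsmall : (LLf f r).length ≤ p
      · rw [List.take_of_length_le hsmall, List.drop_eq_nil_of_le hsmall]
        simp only [List.filter_nil]
        rw [paux_nil, List.append_nil, LL_mem ha h0 _ r rfl a b]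
        have hkey : ∀ a', r ≤ a' → a' < len f → cfun p f a' = Rt f a' := by
          intro a' h1 h2
          have hcond : ∀ i, r ≤ i → i < a' → SSf f r (i+1) < p := by
            intro i hi1 hi2
            have e1 : SSf f r (i+1) ≤ SSf f r a' := SS_mono (by omega)
            have e2 : SSf f r (a'+1) ≤ SSf f r (len f) := SS_mono (by omega)
            have e3 : SSf f r (a'+1) = SSf f r a' + Rt f a' := SS_succ h1
            have e4 : 1 ≤ Rt f a' := R_pos ha h0 h2
            omega
          have hsa : sfun p f a' = SSf f r a' := s_run r hs a' h1 hcond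
          have e2 : SSf f r (a'+1) ≤ SSf f r (len f) := SS_mono (by omega)
          have e3 : SSf f r (a'+1) = SSf f r a' + Rt f a' := SS_succ h1
          unfold cfun; rw [hsa]; omega
        constructor
        · rintro ⟨h1, h2, h3, h4⟩
          refine ⟨h1, h2, ?_, h4⟩
          unfold efun; rw [hkey a h1 h2]; omega
        · rintro ⟨h1, h2, h3, h4⟩
          refine ⟨h1, h2, ?_, h4⟩
          have := hkey a h1 h2
          unfold efun at h3; rw [this] at h3; omega
      · push_neg at hsmall
        obtain ⟨z, hz1, hz2, hz3, hz4⟩ := ZEX ha h0 _ r rfl (p-1) (by omega)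
        have hz3' : SSf f r z < p := by omega
        have hz4' : p ≤ SSf f r z + Rt f z := by omega
        have hcondz : ∀ i, r ≤ i → i < z → SSf f r (i+1) < p := by
          intro i hi1 hi2
          have e1 : SSf f r (i+1) ≤ SSf f r z := SS_mono (by omega)
          omega
        have hsz : sfun p f z = SSf f r z := s_run r hs z hz1 hcondz
        have hsz1 : sfun p f (z+1) = 0 := by rw [sfun, hsz, if_neg (by omega)]
        have hcz : cfun p f z = p - SSf f r z := by unfold cfun; rw [hsz]; omega
        have hRz : Rt f z ≤ f z := R_le
        have hfz : 0 < f z := f_pos_of_lt_len ha h0 hz2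
        have hget : (LLf f r)[p-1]? = some (z, f z - 1 - ((p-1) - SSf f r z)) :=
          LL_get ha h0 _ r rfl z (p-1) hz1 hz2 hz3 hz4
        have htklen : ((LLf f r).take p).length = p := by
          rw [List.length_take]; omega
        have hlast : (((LLf f r).take p).getLastD x) = (z, f z - 1 - ((p-1) - SSf f r z)) := by
          rw [List.getLastD_eq_getLast?, List.getLast?_eq_getElem?, htklen,
            List.getElem?_take_of_lt (by omega), hget]
          rfl
        rw [hlast]
        have hdrop : (LLf f r).drop p = (rowL f z).drop (p - SSf f r z) ++ LLf f (z+1) :=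
          LL_drop ha h0 _ r rfl p z hz1 hz2 (by omega) (by omega)
        rw [hdrop, List.filter_append]
        have hf1 : ((rowL f z).drop (p - SSf f r z)).filter
            (fun d => decide ((z, f z - 1 - ((p-1) - SSf f r z)).1 < d.1)) = [] := by
          rw [List.filter_eq_nil_iff]
          rintro ⟨d1, d2⟩ hd
          have hd2 := List.mem_of_mem_drop hd
          have := (rowL_mem (f := f)).mp hd2
          simp only [decide_eq_true_eq]
          omega
        have hf2 : (LLf f (z+1)).filter
            (fun d => decide ((z, f z - 1 - ((p-1) - SSf f r z)).1 < d.1)) = LLf f (z+1) := by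
          rw [List.filter_eq_self]
          rintro ⟨d1, d2⟩ hd
          have := (LL_mem ha h0 _ (z+1) rfl d1 d2).mp hd
          simp only [decide_eq_true_eq]
          omega
        rw [hf1, hf2, List.nil_append]
        have hlen2 : (LLf f (z+1)).length ≤ fuel := by
          have e1 : (LLf f (z+1)).length = SSf f (z+1) (len f) := LL_length ha h0 _ (z+1) rfl
          have e2 : SSf f r (len f) = SSf f r (z+1) + SSf f (z+1) (len f) :=
            SS_split (by omega) (by omega)
          have e3 : SSf f r (z+1) = SSf f r z + Rt f z := SS_succ hz1
          omega
        rw [List.mem_append, ih (z+1) (by omega) hsz1 hlen2 a b,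
          LL_take_mem ha h0 _ r rfl p a b]
        have hSz1 : SSf f r (z+1) = SSf f r z + Rt f z := SS_succ hz1
        constructor
        · rintro (⟨h1, h2, h3, h4, h5⟩ | ⟨h1, h2, h3, h4⟩)
          · have haz : a ≤ z := by
              by_contra hgt
              have e1 : SSf f r (z+1) ≤ SSf f r a := SS_mono (by omega)
              omega
            rcases eq_or_lt_of_le haz with rfl | hlt2
            · refine ⟨h1, h2, ?_, h4⟩
              unfold efun; rw [hcz]; omega
            · have hcond : ∀ i, r ≤ i → i < a → SSf f r (i+1) < p := by
                intro i hi1 hi2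
                have e1 : SSf f r (i+1) ≤ SSf f r z := SS_mono (by omega)
                omega
              have hsa : sfun p f a = SSf f r a := s_run r hs a h1 hcond
              have e1 : SSf f r (a+1) ≤ SSf f r z := SS_mono (by omega)
              have e2 : SSf f r (a+1) = SSf f r a + Rt f a := SS_succ h1
              have hca : cfun p f a = Rt f a := by unfold cfun; rw [hsa]; omega
              refine ⟨h1, h2, ?_, h4⟩
              unfold efun; rw [hca]; omega
          · exact ⟨by omega, h2, h3, h4⟩
        · rintro ⟨h1, h2, h3, h4⟩
          have hRa : Rt f a ≤ f a := R_le
          have hfa : 0 < f a := f_pos_of_lt_len ha h0 h2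
          rcases lt_trichotomy a z with hlt2 | rfl | hgt
          · have hcond : ∀ i, r ≤ i → i < a → SSf f r (i+1) < p := by
              intro i hi1 hi2
              have e1 : SSf f r (i+1) ≤ SSf f r z := SS_mono (by omega)
              omega
            have hsa : sfun p f a = SSf f r a := s_run r hs a h1 hcond
            have e1 : SSf f r (a+1) ≤ SSf f r z := SS_mono (by omega)
            have e2 : SSf f r (a+1) = SSf f r a + Rt f a := SS_succ h1
            have hca : cfun p f a = Rt f a := by unfold cfun; rw [hsa]; omega
            have hRapos : 1 ≤ Rt f a := R_pos ha h0 h2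
            unfold efun at h3; rw [hca] at h3
            exact Or.inl ⟨h1, h2, by omega, h4, by omega⟩
          · unfold efun at h3; rw [hcz] at h3
            exact Or.inl ⟨h1, h2, by omega, h4, by omega⟩
          · exact Or.inr ⟨by omega, h2, h3, h4⟩

include ha h0 hp in
lemma pRim_mem {a b : ℕ} : (a, b) ∈ pRimList p f ↔
    a < len f ∧ efun p f a ≤ b ∧ b < f a := by
  have hre : rimList f = LLf f 0 := by
    unfold rimList LLf rowL Rt
    rw [List.range_eq_range', Nat.sub_zero]
  rw [pRimList, hre, main ha h0 hp _ 0 (by omega) rfl (le_refl _) a b]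
  omega

end Main


section Fin1

lemma finset_dc (F : Finset ℕ) (hdc : ∀ a b, a ≤ b → b ∈ F → a ∈ F) :
    F = Finset.range F.card := by
  have hsub : Finset.range F.card ⊆ F := by
    intro t ht
    rw [Finset.mem_range] at ht
    by_contra hns
    have hFr : F ⊆ Finset.range t := by
      intro x hx
      rw [Finset.mem_range]
      by_contra hxt
      exact hns (hdc t x (by omega) hx)
    have := Finset.card_le_card hFr
    rw [Finset.card_range] at this
    omega
  exact (Finset.eq_of_subset_of_card_le hsub (by rw [Finset.card_range])).symm

lemma set_dc (S : Set ℕ) (hfin : S.Finite) (hdc : ∀ a b, a ≤ b → b ∈ S → a ∈ S) :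
    S = Set.Iio (Nat.card S) := by
  classical
  have h2 : Nat.card S = hfin.toFinset.card := by
    rw [Nat.card_coe_set_eq, Set.ncard_eq_toFinset_card _ hfin]
  have h3 := finset_dc hfin.toFinset (fun a b hab hb => by
    rw [Set.Finite.mem_toFinset] at hb ⊢
    exact hdc a b hab hb)
  rw [h2]
  ext t
  rw [Set.mem_Iio, ← Set.Finite.mem_toFinset hfin, h3, Finset.mem_range, Finset.card_range]

end Fin1

section Struct
variable {p : ℕ} {f : ℕ → ℕ} (ha : Antitone f) (h0 : ∃ N, f N = 0) (hp : 0 < p)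
  (hsc : conj f = f)

include ha h0 in
lemma conj_lt_iff {i j : ℕ} : j < conj f i ↔ i < f j := by
  obtain ⟨N, hN⟩ := h0
  have hfin : {t | i < f t}.Finite := by
    apply Set.Finite.subset (Set.finite_Iio N)
    intro t ht
    simp only [Set.mem_setOf_eq] at ht
    simp only [Set.mem_Iio]
    by_contra hc
    have := ha (le_of_not_gt hc)
    omega
  have hdc : ∀ a b, a ≤ b → b ∈ {t | i < f t} → a ∈ {t | i < f t} := by
    intro a b hab hb
    simp only [Set.mem_setOf_eq] at *
    have := ha hab
    omega
  have hset := set_dc _ hfin hdc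
  unfold conj
  constructor
  · intro h
    have hj : j ∈ Set.Iio (Nat.card {t | i < f t}) := Set.mem_Iio.mpr h
    rw [← hset] at hj
    exact hj
  · intro h
    have hj : j ∈ {t | i < f t} := h
    rw [hset] at hj
    exact Set.mem_Iio.mp hj

include ha h0 hsc in
lemma f_lt_iff {i j : ℕ} : j < f i ↔ i < f j := by
  conv_lhs => rw [← hsc]
  exact conj_lt_iff ha h0

include ha h0 hp in
lemma qv_le_len : qv p f ≤ len f := by
  apply Nat.sInf_le
  have : f (len f) = 0 := (f_eq_zero_iff ha h0).mpr (le_refl _)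
  simp only [Set.mem_setOf_eq, efun, this]
  omega

include ha h0 hp in
lemma qv_nonempty : {i | efun p f i ≤ i}.Nonempty := by
  refine ⟨len f, ?_⟩
  have : f (len f) = 0 := (f_eq_zero_iff ha h0).mpr (le_refl _)
  simp only [Set.mem_setOf_eq, efun, this]
  omega

include ha h0 hp in
lemma e_gt_of_lt_q {i : ℕ} (h : i < qv p f) : i < efun p f i := by
  have := Nat.notMem_of_lt_sInf (by exact h : i < qv p f)
  simp only [Set.mem_setOf_eq] at this
  omega

include ha h0 hp in
lemma e_le_of_ge_q {i : ℕ} (h : qv p f ≤ i) : efun p f i ≤ i := by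
  have h1 : efun p f (qv p f) ≤ qv p f := Nat.sInf_mem (qv_nonempty ha h0 hp)
  have h2 : efun p f i ≤ efun p f (qv p f) := e_anti ha h0 hp h
  omega

include ha h0 hp in
lemma e_ge_q {i : ℕ} (h : i < qv p f) : qv p f ≤ efun p f i := by
  have h1 : qv p f - 1 < efun p f (qv p f - 1) := e_gt_of_lt_q ha h0 hp (by omega)
  have h2 : efun p f (qv p f - 1) ≤ efun p f i := e_anti ha h0 hp (by omega : i ≤ qv p f - 1)
  omega

include ha h0 hp in
lemma f_gt_of_lt_q {i : ℕ} (h : i < qv p f) : i < f i := by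
  have h1 := e_gt_of_lt_q ha h0 hp h
  have h2 : efun p f i ≤ f i := e_le_f
  omega

include ha h0 hp in
lemma lt_len_of_lt_q {i : ℕ} (h : i < qv p f) : i < len f := by
  have h1 := f_gt_of_lt_q ha h0 hp h
  rcases Nat.eq_zero_or_pos (f i) with h2 | h2
  · omega
  · by_contra hc
    have := (f_eq_zero_iff ha h0 (i := i)).mpr (by omega)
    omega

open Classical in
include ha h0 hp in
lemma Gf_iff {i j : ℕ} (hi : qv p f ≤ i) : j < Gf p f i ↔ j < qv p f ∧ i < efun p f j := by
  have hG : Gf p f i = ((Finset.range (qv p f)).filter (fun j => i < efun p f j)).card := by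
    rw [Gf, if_neg (by omega)]
  have hdc := finset_dc ((Finset.range (qv p f)).filter (fun j => i < efun p f j)) ?dc
  case dc =>
    intro a b hab hb
    simp only [Finset.mem_filter, Finset.mem_range] at *
    have := e_anti ha h0 hp hab
    exact ⟨by omega, by omega⟩
  constructor
  · intro h
    rw [hG] at h
    have : j ∈ Finset.range ((Finset.range (qv p f)).filter (fun j => i < efun p f j)).card :=
      Finset.mem_range.mpr h
    rw [← hdc] at this
    simpa using this
  · rintro ⟨h1, h2⟩
    have : j ∈ (Finset.range (qv p f)).filter (fun j => i < efun p f j) := by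
      simp only [Finset.mem_filter, Finset.mem_range]; exact ⟨h1, h2⟩
    rw [hdc, Finset.mem_range] at this
    omega

open Classical in
include ha h0 hp in
lemma Gf_le_q {i : ℕ} (hi : qv p f ≤ i) : Gf p f i ≤ qv p f := by
  rw [Gf, if_neg (by omega)]
  calc ((Finset.range (qv p f)).filter _).card ≤ (Finset.range (qv p f)).card :=
        Finset.card_filter_le _ _
    _ = qv p f := Finset.card_range _

end Struct


lemma natcard_Iio (n : ℕ) : Nat.card (Set.Iio n) = n := by
  rw [← Finset.coe_Iio, Nat.card_coe_set_eq, Set.ncard_coe_finset, Nat.card_Iio]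

section Final
variable {p : ℕ} {f : ℕ → ℕ} (ha : Antitone f) (h0 : ∃ N, f N = 0) (hp : 0 < p)
  (hsc : conj f = f)

include ha h0 in
lemma lt_len_of_pos {i : ℕ} (h : 0 < f i) : i < len f := by
  by_contra hc
  have := (f_eq_zero_iff ha h0 (i := i)).mpr (by omega)
  omega

include ha h0 hp in
lemma U_mem {a b : ℕ} : (a, b) ∈ (UList p f).toFinset ↔
    a < len f ∧ efun p f a ≤ b ∧ b < f a ∧ a ≤ b := by
  rw [List.mem_toFinset]
  unfold UList
  rw [List.mem_filter, pRim_mem ha h0 hp]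
  simp only [decide_eq_true_eq]
  tauto

include ha h0 hp in
lemma rimStar_mem {a b : ℕ} : (a, b) ∈ rimStar p f ↔
    ((a < len f ∧ efun p f a ≤ b ∧ b < f a ∧ a ≤ b) ∨
     (b < len f ∧ efun p f b ≤ a ∧ a < f b ∧ b ≤ a)) := by
  unfold rimStar
  rw [Finset.mem_union, U_mem ha h0 hp]
  constructor
  · rintro (h | h)
    · exact Or.inl h
    · rw [Finset.mem_image] at h
      obtain ⟨⟨c1, c2⟩, hc, heq⟩ := h
      rw [U_mem ha h0 hp] at hc
      injection heq with e1 e2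
      subst e1; subst e2
      exact Or.inr hc
  · rintro (h | h)
    · exact Or.inl h
    · refine Or.inr (Finset.mem_image.mpr ⟨(b, a), (U_mem ha h0 hp).mpr h, rfl⟩)

include ha h0 hp hsc in
lemma memrow {i b : ℕ} : ((i, b) ∈ rimStar p f) ↔ (Gf p f i ≤ b ∧ b < f i) := by
  rw [rimStar_mem ha h0 hp]
  by_cases hq : i < qv p f
  · have hGi : Gf p f i = efun p f i := by rw [Gf, if_pos hq]
    have hei := e_gt_of_lt_q ha h0 hp hq
    constructor
    · rintro (⟨h1, h2, h3, h4⟩ | ⟨h1, h2, h3, h4⟩)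
      · exact ⟨by omega, h3⟩
      · have h5 : b < qv p f := by omega
        have h6 := e_ge_q ha h0 hp h5
        omega
    · rintro ⟨h1, h2⟩
      have hlen : i < len f := lt_len_of_lt_q ha h0 hp hq
      exact Or.inl ⟨hlen, by omega, h2, by omega⟩
  · push_neg at hq
    have heqi := e_le_of_ge_q ha h0 hp hq
    have hGq := Gf_le_q ha h0 hp hq
    constructor
    · rintro (⟨h1, h2, h3, h4⟩ | ⟨h1, h2, h3, h4⟩)
      · exact ⟨by omega, h3⟩
      · refine ⟨?_, (f_lt_iff ha h0 hsc).mpr h3⟩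
        by_contra hc
        push_neg at hc
        have := (Gf_iff ha h0 hp hq).mp hc
        omega
    · rintro ⟨h1, h2⟩
      by_cases hbi : i ≤ b
      · exact Or.inl ⟨lt_len_of_pos ha h0 (by omega), by omega, h2, hbi⟩
      · push_neg at hbi
        have hfb : f i ≤ f b := ha (by omega)
        have hblen : b < len f := lt_len_of_pos ha h0 (by omega)
        have hif : i < f b := (f_lt_iff ha h0 hsc).mp h2
        refine Or.inr ⟨hblen, ?_, hif, by omega⟩
        by_cases hbq : qv p f ≤ b
        · have := e_le_of_ge_q ha h0 hp hbq; omega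
        · push_neg at hbq
          have hni : ¬ (b < Gf p f i) := by omega
          rw [Gf_iff ha h0 hp hq] at hni
          push_neg at hni
          have := hni hbq
          omega

include ha h0 hp hsc in
lemma row_card {i : ℕ} :
    ((rimStar p f).filter fun c => c.1 = i).card = f i - Gf p f i := by
  have hfe : (rimStar p f).filter (fun c => c.1 = i) =
      (Finset.Ico (Gf p f i) (f i)).image (fun t => (i, t)) := by
    ext ⟨a, b⟩
    rw [Finset.mem_filter, Finset.mem_image]
    constructor
    · rintro ⟨hmem, rfl⟩
      exact ⟨b, Finset.mem_Ico.mpr ((memrow ha h0 hp hsc).mp hmem), rfl⟩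
    · rintro ⟨t, ht, heq⟩
      injection heq with e1 e2
      subst e1; subst e2
      rw [Finset.mem_Ico] at ht
      exact ⟨(memrow ha h0 hp hsc).mpr ht, rfl⟩
  rw [hfe, Finset.card_image_of_injective _ (fun x y hxy => by injection hxy),
    Nat.card_Ico]

include ha h0 hp hsc in
lemma Gf_le_f {i : ℕ} : Gf p f i ≤ f i := by
  by_cases hq : i < qv p f
  · rw [Gf, if_pos hq]; exact e_le_f
  · push_neg at hq
    rcases Nat.eq_zero_or_pos (Gf p f i) with h | h
    · omega
    · have h1 : Gf p f i - 1 < Gf p f i := by omega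
      have h2 := (Gf_iff ha h0 hp hq).mp h1
      have h3 : efun p f (Gf p f i - 1) ≤ f (Gf p f i - 1) := e_le_f
      have h4 : Gf p f i - 1 < f i := (f_lt_iff ha h0 hsc).mpr (by omega)
      omega

include ha h0 hp hsc in
lemma removeRimStar_eq : removeRimStar p f = Gf p f := by
  funext i
  unfold removeRimStar
  rw [row_card ha h0 hp hsc]
  have := Gf_le_f ha h0 hp hsc (i := i)
  omega

end Final


section Final2
variable {p : ℕ} {f : ℕ → ℕ} (ha : Antitone f) (h0 : ∃ N, f N = 0) (hp : 0 < p)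
  (hsc : conj f = f)

include ha h0 hp in
lemma Gf_anti : Antitone (Gf p f) := by
  apply antitone_nat_of_succ_le
  intro i
  by_cases h1 : i + 1 < qv p f
  · rw [Gf, if_pos h1, Gf, if_pos (by omega)]
    exact e_anti ha h0 hp (by omega)
  · push_neg at h1
    by_cases h2 : i < qv p f
    · have e1 : Gf p f (i+1) ≤ qv p f := Gf_le_q ha h0 hp h1
      have e2 : qv p f ≤ efun p f i := e_ge_q ha h0 hp h2
      have e3 : Gf p f i = efun p f i := by rw [Gf, if_pos h2]
      omega
    · push_neg at h2
      rw [Gf, if_neg (by omega), Gf, if_neg (by omega)]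
      apply Finset.card_le_card
      intro x hx
      rw [Finset.mem_filter] at hx ⊢
      exact ⟨hx.1, by omega⟩

include ha h0 hp in
lemma Gf_zero : Gf p f (qv p f + f 0) = 0 := by
  rw [Gf, if_neg (by omega)]
  rw [Finset.card_eq_zero, Finset.filter_eq_empty_iff]
  intro j hj
  rw [Finset.mem_range] at hj
  have h1 : efun p f j ≤ f j := e_le_f
  have h2 : f j ≤ f 0 := ha (by omega)
  omega

include ha h0 hp in
lemma Gf_selfconj : conj (Gf p f) = Gf p f := by
  funext j
  unfold conj
  by_cases hq : j < qv p f
  · have hset : {i | j < Gf p f i} = Set.Iio (efun p f j) := by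
      ext i
      simp only [Set.mem_setOf_eq, Set.mem_Iio]
      have hqe : qv p f ≤ efun p f j := e_ge_q ha h0 hp hq
      by_cases hiq : i < qv p f
      · have hGi : Gf p f i = efun p f i := by rw [Gf, if_pos hiq]
        have : qv p f ≤ efun p f i := e_ge_q ha h0 hp hiq
        constructor
        · intro _; omega
        · intro _; omega
      · push_neg at hiq
        rw [Gf_iff ha h0 hp hiq]
        constructor
        · rintro ⟨_, h⟩; omega
        · intro h; exact ⟨hq, h⟩
    rw [hset, natcard_Iio, Gf, if_pos hq]
  · push_neg at hq
    have hset : {i | j < Gf p f i} = Set.Iio (Gf p f j) := by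
      ext i
      simp only [Set.mem_setOf_eq, Set.mem_Iio]
      by_cases hiq : i < qv p f
      · have hGi : Gf p f i = efun p f i := by rw [Gf, if_pos hiq]
        rw [hGi, Gf_iff ha h0 hp hq]
        constructor
        · intro h; exact ⟨hiq, h⟩
        · rintro ⟨_, h⟩; exact h
      · push_neg at hiq
        rw [Gf_iff ha h0 hp hiq]
        have := Gf_le_q ha h0 hp hq
        constructor
        · rintro ⟨h1, _⟩; omega
        · intro h; omega
    rw [hset, natcard_Iio]

include ha hsc in
lemma s_inv : ∀ i, (∀ j, j ≤ i → j < f j) →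
    ∃ r, r ≤ i ∧ hook f r r = hook f i i + 2 * sfun p f i := by
  intro i
  induction i with
  | zero => intro _; exact ⟨0, le_refl _, by simp [sfun]⟩
  | succ i ihi =>
    intro hdiag
    by_cases hbr : sfun p f i + Rt f i < p
    · have hs1 : sfun p f (i+1) = sfun p f i + Rt f i := by rw [sfun, if_pos hbr]
      obtain ⟨r, hr1, hr2⟩ := ihi (fun j hj => hdiag j (by omega))
      refine ⟨r, by omega, ?_⟩
      rw [hs1, hr2]
      have h1 : i < f i := hdiag i (by omega)
      have h2 : i + 1 < f (i+1) := hdiag (i+1) (le_refl _)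
      have h3 : f (i+1) ≤ f i := ha (by omega)
      unfold hook Rt
      rw [hsc]
      omega
    · refine ⟨i+1, le_refl _, ?_⟩
      rw [sfun, if_neg hbr]
      omega

include ha h0 hp hsc in
lemma Gf_hooks (hbg : ∀ i, i < f i → ¬ p ∣ hook f i i) :
    ∀ i, i < Gf p f i → ¬ p ∣ hook (Gf p f) i i := by
  intro i hi
  have hq : i < qv p f := by
    by_contra hc
    push_neg at hc
    have := Gf_le_q ha h0 hp hc
    omega
  have hGi : Gf p f i = efun p f i := by rw [Gf, if_pos hq]
  have hei : i < efun p f i := e_gt_of_lt_q ha h0 hp hq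
  have hconjG : conj (Gf p f) = Gf p f := Gf_selfconj ha h0 hp
  have hef : efun p f i ≤ f i := e_le_f
  have hhook : hook (Gf p f) i i = 2 * efun p f i - 2 * i - 1 := by
    unfold hook
    rw [hconjG, hGi]
    omega
  rw [hhook]
  have hlen : i < len f := lt_len_of_lt_q ha h0 hp hq
  have hfi : i < f i := f_gt_of_lt_q ha h0 hp hq
  by_cases hcase : Rt f i ≤ p - sfun p f i
  · have hslt : sfun p f i < p := s_lt hp i
    have hci : cfun p f i = Rt f i := by unfold cfun; omega
    have hfmono : f (i+1) ≤ f i := ha (by omega)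
    have hf1 : 1 ≤ f (i+1) := by
      by_contra hc
      have hR : Rt f i = f i := by unfold Rt; omega
      have : efun p f i = 0 := by unfold efun; rw [hci, hR]; omega
      omega
    have hfe : efun p f i = f (i+1) - 1 := by
      unfold efun
      rw [hci]
      unfold Rt
      omega
    have hd : i + 1 < f (i+1) := by omega
    have hne := hbg (i+1) hd
    intro hdvd
    apply hne
    have heq : hook f (i+1) (i+1) = 2 * efun p f i - 2 * i - 1 := by
      unfold hook; rw [hsc]; omega
    rw [heq]; exact hdvd
  · push_neg at hcase
    have hslt : sfun p f i < p := s_lt hp i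
    have hci : cfun p f i = p - sfun p f i := by unfold cfun; omega
    obtain ⟨r, hr1, hr2⟩ := s_inv (p := p) ha hsc i (fun j hj => f_gt_of_lt_q ha h0 hp (by omega))
    have hrf : r < f r := f_gt_of_lt_q ha h0 hp (by omega)
    have hne := hbg r hrf
    intro hdvd
    apply hne
    have hkey : hook f r r = (2 * efun p f i - 2 * i - 1) + 2 * p := by
      rw [hr2]
      have h1 : hook f i i = 2 * f i - 2 * i - 1 := by
        unfold hook; rw [hsc]; omega
      have h2 : efun p f i = f i - (p - sfun p f i) := by unfold efun; rw [hci]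
      rw [h1, h2]
      omega
    obtain ⟨t, ht⟩ := hdvd
    exact ⟨t + 2, by rw [hkey, ht]; ring⟩

end Final2


/-- Lemma: removing the `p`-rim* of a BG-partition yields a BG-partition. -/
theorem removeRimStar_isBG (p : ℕ) (hp : p.Prime) (hodd : Odd p)
    (f : ℕ → ℕ) (hf : IsBG p f) :
    IsBG p (removeRimStar p f) := by
  obtain ⟨⟨ha, h0⟩, hsc, hbg⟩ := hf
  have hp0 : 0 < p := hp.pos
  rw [removeRimStar_eq ha h0 hp0 hsc]
  exact ⟨⟨Gf_anti ha h0 hp0, ⟨qv p f + f 0, Gf_zero ha h0 hp0⟩⟩,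
    Gf_selfconj ha h0 hp0, Gf_hooks ha h0 hp0 hsc hbg⟩


end Mull
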